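/- (Geometric decay along the optimal trajectory) Let N ≥ 1 be an integer, x ∈ X₀, and let (u(0),…,u(N−1)) be a feasible sequence for the N-QP at x whose cost equals V_N(x), with associated trajectory x(0) = x, x(τ+1) = A x(τ) + B u(τ). Then for every ℓ ∈ {0,1,…,N}, V_ℓ(x(N−ℓ)) ≤ (∏_{κ=ℓ}^{N−1}(1 − λ_min(P)/φ_{κ+1}))·V_N(x), where V_0(z) := zᵀ P z. In particular, ‖x(N)‖² ≤ (1/λ_min(P))·(∏_{κ=0}^{N−1}(1 − λ_min(P)/φ_{κ+1}))·V_N(x). -/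

import Mathlib

open Matrix Finset Filter Topology

/-- The smallest eigenvalue of a (symmetric) real matrix. -/
noncomputable def lamMin {n : ℕ} (R : Matrix (Fin n) (Fin n) ℝ) : ℝ :=
  if h : R.IsHermitian then ⨅ i, h.eigenvalues i else 0

/-- The largest eigenvalue of a (symmetric) real matrix. -/
noncomputable def lamMax {n : ℕ} (R : Matrix (Fin n) (Fin n) ℝ) : ℝ :=
  if h : R.IsHermitian then ⨆ i, h.eigenvalues i else 0

/-- The quadratic form `xᵀ R x`. -/
noncomputable def qf {p : ℕ} (R : Matrix (Fin p) (Fin p) ℝ) (x : Fin p → ℝ) : ℝ :=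
  x ⬝ᵥ R.mulVec x

/-- λ := 1 − λ_min(Q̄)/λ_max(P̄). -/
noncomputable def lamParam {n : ℕ} (Qb Pb : Matrix (Fin n) (Fin n) ℝ) : ℝ :=
  1 - lamMin Qb / lamMax Pb

/-- φ_N := (λ_max(P̄)·λ_max(P + KᵀQK)/λ_min(P̄))·(1 − λ^{N+1})/(1 − λ). -/
noncomputable def phi {n m : ℕ} (Qb Pb P : Matrix (Fin n) (Fin n) ℝ)
    (Q : Matrix (Fin m) (Fin m) ℝ) (K : Matrix (Fin m) (Fin n) ℝ) (N : ℕ) : ℝ :=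
  (lamMax Pb * lamMax (P + Kᵀ * Q * K) / lamMin Pb) *
    ((1 - lamParam Qb Pb ^ (N + 1)) / (1 - lamParam Qb Pb))

/-- φ_∞ := λ_max(P̄)·λ_max(P + KᵀQK)/(λ_min(P̄)·(1 − λ)). -/
noncomputable def phiInf {n m : ℕ} (Qb Pb P : Matrix (Fin n) (Fin n) ℝ)
    (Q : Matrix (Fin m) (Fin m) ℝ) (K : Matrix (Fin m) (Fin n) ℝ) : ℝ :=
  lamMax Pb * lamMax (P + Kᵀ * Q * K) / (lamMin Pb * (1 - lamParam Qb Pb))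

/-- ψ := λ_max(KᵀQK + ĀᵀPĀ)/λ_min(P). -/
noncomputable def psiC {n m : ℕ} (P Abar : Matrix (Fin n) (Fin n) ℝ)
    (Q : Matrix (Fin m) (Fin m) ℝ) (K : Matrix (Fin m) (Fin n) ℝ) : ℝ :=
  lamMax (Kᵀ * Q * K + Abarᵀ * P * Abar) / lamMin P

/-- χ := 1 − λ_min(P)/φ_∞. -/
noncomputable def chiC {n m : ℕ} (Qb Pb P : Matrix (Fin n) (Fin n) ℝ)
    (Q : Matrix (Fin m) (Fin m) ℝ) (K : Matrix (Fin m) (Fin n) ℝ) : ℝ :=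
  1 - lamMin P / phiInf Qb Pb P Q K

/-- α_N := (λ_max(KᵀQK + ĀᵀPĀ)/λ_min(P))·∏_{κ=0}^{N−1}(1 − λ_min(P)/φ_{κ+1}). -/
noncomputable def alphaC {n m : ℕ} (Qb Pb P Abar : Matrix (Fin n) (Fin n) ℝ)
    (Q : Matrix (Fin m) (Fin m) ℝ) (K : Matrix (Fin m) (Fin n) ℝ) (N : ℕ) : ℝ :=
  psiC P Abar Q K * ∏ κ ∈ Finset.range N, (1 - lamMin P / phi Qb Pb P Q K (κ + 1))

/-- γ_{N,S} := (1 − λ_min(P)/φ_∞)·max{1 + α_{N−S−1}, (1 + α_{N−1})·∏_{ℓ=N−S}^{N−1}(1 + α_ℓ)}. -/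
noncomputable def gammaNS {n m : ℕ} (Qb Pb P Abar : Matrix (Fin n) (Fin n) ℝ)
    (Q : Matrix (Fin m) (Fin m) ℝ) (K : Matrix (Fin m) (Fin n) ℝ) (N S : ℕ) : ℝ :=
  (1 - lamMin P / phiInf Qb Pb P Q K) *
    max (1 + alphaC Qb Pb P Abar Q K (N - S - 1))
      ((1 + alphaC Qb Pb P Abar Q K (N - 1)) *
        ∏ ℓ ∈ Finset.Ico (N - S) N, (1 + alphaC Qb Pb P Abar Q K ℓ))

/-- The trajectory of `x(τ+1) = A x(τ) + B u(τ)` from `x0` under the control sequence `u`. -/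
def traj {n m : ℕ} (A : Matrix (Fin n) (Fin n) ℝ) (B : Matrix (Fin n) (Fin m) ℝ)
    (x0 : Fin n → ℝ) (u : ℕ → Fin m → ℝ) : ℕ → Fin n → ℝ
  | 0 => x0
  | τ + 1 => A *ᵥ traj A B x0 u τ + B *ᵥ u τ

/-- Feasibility of a control sequence `u(0),…,u(N−1)` for the `N`-QP at `x`. -/
def Feasible {n m : ℕ} (A : Matrix (Fin n) (Fin n) ℝ) (B : Matrix (Fin n) (Fin m) ℝ)
    (X0 : Set (Fin n → ℝ)) (U : Set (Fin m → ℝ)) (N : ℕ) (x : Fin n → ℝ)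
    (u : ℕ → Fin m → ℝ) : Prop :=
  (∀ τ < N, u τ ∈ U) ∧ (∀ τ < N, traj A B x u (τ + 1) ∈ X0)

/-- The cost `Σ_{τ=0}^{N−1}(x(τ)ᵀPx(τ) + u(τ)ᵀQu(τ)) + x(N)ᵀPx(N)` of the `N`-QP. -/
noncomputable def cost {n m : ℕ} (A : Matrix (Fin n) (Fin n) ℝ) (B : Matrix (Fin n) (Fin m) ℝ)
    (P : Matrix (Fin n) (Fin n) ℝ) (Q : Matrix (Fin m) (Fin m) ℝ) (N : ℕ)
    (x : Fin n → ℝ) (u : ℕ → Fin m → ℝ) : ℝ :=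
  (∑ τ ∈ Finset.range N, (qf P (traj A B x u τ) + qf Q (u τ))) + qf P (traj A B x u N)

/-- `V_N(x)`: the optimal value of the `N`-QP at `x`. -/
noncomputable def Vopt {n m : ℕ} (A : Matrix (Fin n) (Fin n) ℝ) (B : Matrix (Fin n) (Fin m) ℝ)
    (P : Matrix (Fin n) (Fin n) ℝ) (Q : Matrix (Fin m) (Fin m) ℝ)
    (X0 : Set (Fin n → ℝ)) (U : Set (Fin m → ℝ)) (N : ℕ) (x : Fin n → ℝ) : ℝ :=
  sInf (cost A B P Q N x '' {u | Feasible A B X0 U N x u})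

lemma qf_nonneg {p : ℕ} {R : Matrix (Fin p) (Fin p) ℝ} (h : R.PosSemidef) (x : Fin p → ℝ) :
    0 ≤ qf R x := by simpa [qf] using h.dotProduct_mulVec_nonneg x

lemma qf_transform {p q : ℕ} (R : Matrix (Fin p) (Fin p) ℝ) (M : Matrix (Fin p) (Fin q) ℝ)
    (w : Fin q → ℝ) : qf (Mᵀ * R * M) w = qf R (M *ᵥ w) := by
  simp [qf, ← mulVec_mulVec, dotProduct_mulVec, vecMul_transpose]

lemma qf_add {p : ℕ} (R S : Matrix (Fin p) (Fin p) ℝ) (x : Fin p → ℝ) :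
    qf (R + S) x = qf R x + qf S x := by
  simp [qf, add_mulVec, dotProduct_add]

lemma qf_sub {p : ℕ} (R S : Matrix (Fin p) (Fin p) ℝ) (x : Fin p → ℝ) :
    qf (R - S) x = qf R x - qf S x := by
  simp [qf, sub_mulVec, dotProduct_sub]

lemma dot_self_nonneg {p : ℕ} (x : Fin p → ℝ) : 0 ≤ x ⬝ᵥ x :=
  Finset.sum_nonneg fun i _ => mul_self_nonneg _

lemma qf_spectral {p : ℕ} {R : Matrix (Fin p) (Fin p) ℝ} (hR : R.IsHermitian) (x : Fin p → ℝ) :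
    qf R x = ∑ i, hR.eigenvalues i * ((star (hR.eigenvectorUnitary : Matrix (Fin p) (Fin p) ℝ) *ᵥ x) i)^2 ∧
    x ⬝ᵥ x = ∑ i, ((star (hR.eigenvectorUnitary : Matrix (Fin p) (Fin p) ℝ) *ᵥ x) i)^2 := by
  set U : Matrix (Fin p) (Fin p) ℝ := (hR.eigenvectorUnitary : Matrix (Fin p) (Fin p) ℝ) with hU
  have hstar : star U = Uᵀ := by
    simp [Matrix.star_eq_conjTranspose, Matrix.conjTranspose_eq_transpose_of_trivial]
  set y := star U *ᵥ x with hy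
  have hUU : U * star U = 1 := Matrix.mem_unitaryGroup_iff.mp hR.eigenvectorUnitary.2
  have hUU' : star U * U = 1 := Matrix.mem_unitaryGroup_iff'.mp hR.eigenvectorUnitary.2
  constructor
  · conv_lhs => rw [qf, hR.spectral_theorem, Unitary.conjStarAlgAut_apply]
    rw [← Matrix.mulVec_mulVec, ← Matrix.mulVec_mulVec, Matrix.dotProduct_mulVec,
      ← Matrix.mulVec_transpose, ← hstar, ← hy]
    simp [Matrix.mulVec_diagonal, dotProduct, mul_comm, sq, mul_assoc, mul_left_comm]
  · conv_lhs => rw [show x = U *ᵥ y by rw [hy, Matrix.mulVec_mulVec, hUU, Matrix.one_mulVec]]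
    rw [Matrix.dotProduct_mulVec, Matrix.vecMul_mulVec, ← hstar, hUU', Matrix.vecMul_one]
    simp [dotProduct, sq]

lemma lamMax_eq {p : ℕ} {R : Matrix (Fin p) (Fin p) ℝ} (hR : R.IsHermitian) :
    lamMax R = ⨆ i, hR.eigenvalues i := by rw [lamMax, dif_pos hR]

lemma lamMin_eq {p : ℕ} {R : Matrix (Fin p) (Fin p) ℝ} (hR : R.IsHermitian) :
    lamMin R = ⨅ i, hR.eigenvalues i := by rw [lamMin, dif_pos hR]

lemma qf_le_lamMax {p : ℕ} {R : Matrix (Fin p) (Fin p) ℝ} (hR : R.IsHermitian) (x : Fin p → ℝ) :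
    qf R x ≤ lamMax R * (x ⬝ᵥ x) := by
  obtain ⟨h1, h2⟩ := qf_spectral hR x
  rw [h1, h2, lamMax_eq hR, Finset.mul_sum]
  refine Finset.sum_le_sum fun i _ => ?_
  exact mul_le_mul_of_nonneg_right
    (le_ciSup (Set.Finite.bddAbove (Set.finite_range _)) i) (sq_nonneg _)

lemma lamMin_le_qf {p : ℕ} {R : Matrix (Fin p) (Fin p) ℝ} (hR : R.IsHermitian) (x : Fin p → ℝ) :
    lamMin R * (x ⬝ᵥ x) ≤ qf R x := by
  obtain ⟨h1, h2⟩ := qf_spectral hR x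
  rw [h1, h2, lamMin_eq hR, Finset.mul_sum]
  refine Finset.sum_le_sum fun i _ => ?_
  exact mul_le_mul_of_nonneg_right
    (ciInf_le (Set.Finite.bddBelow (Set.finite_range _)) i) (sq_nonneg _)

lemma lamMin_pos {p : ℕ} [NeZero p] {R : Matrix (Fin p) (Fin p) ℝ} (hR : R.PosDef) :
    0 < lamMin R := by
  rw [lamMin_eq hR.isHermitian]
  obtain ⟨i, hi⟩ := Finite.exists_min hR.isHermitian.eigenvalues
  have : ⨅ j, hR.isHermitian.eigenvalues j = hR.isHermitian.eigenvalues i :=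
    le_antisymm (ciInf_le (Set.Finite.bddBelow (Set.finite_range _)) i) (le_ciInf hi)
  rw [this]; exact hR.eigenvalues_pos i

lemma lamMin_le_lamMax {p : ℕ} [NeZero p] {R : Matrix (Fin p) (Fin p) ℝ} (hR : R.IsHermitian) :
    lamMin R ≤ lamMax R := by
  rw [lamMin_eq hR, lamMax_eq hR]
  exact le_trans (ciInf_le (Set.Finite.bddBelow (Set.finite_range _)) (Classical.arbitrary _))
    (le_ciSup (Set.Finite.bddAbove (Set.finite_range _)) _)

/-- an eigenvector achieving lamMax -/
lemma exists_qf_eq_lamMax {p : ℕ} [NeZero p] {R : Matrix (Fin p) (Fin p) ℝ}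
    (hR : R.IsHermitian) : ∃ v : Fin p → ℝ, 0 < v ⬝ᵥ v ∧ qf R v = lamMax R * (v ⬝ᵥ v) := by
  obtain ⟨i, hi⟩ := Finite.exists_max hR.eigenvalues
  have hmax : lamMax R = hR.eigenvalues i := by
    rw [lamMax_eq hR]
    exact le_antisymm (ciSup_le hi) (le_ciSup (Set.Finite.bddAbove (Set.finite_range _)) i)
  refine ⟨⇑(hR.eigenvectorBasis i), ?_, ?_⟩
  · have hne : (⇑(hR.eigenvectorBasis i) : Fin p → ℝ) ≠ 0 := by
      have := hR.eigenvectorBasis.orthonormal.ne_zero i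
      intro h; apply this; ext j; exact congrFun h j
    rcases Function.ne_iff.mp hne with ⟨j, hj⟩
    have : 0 < (⇑(hR.eigenvectorBasis i) j)^2 :=
      lt_of_le_of_ne (sq_nonneg _) (Ne.symm (pow_ne_zero 2 hj))
    calc (0:ℝ) < (⇑(hR.eigenvectorBasis i) j)^2 := this
      _ ≤ _ := Finset.single_le_sum (f := fun k => (⇑(hR.eigenvectorBasis i) k)^2)
          (fun k _ => sq_nonneg _) (Finset.mem_univ j) |>.trans_eq (by simp [dotProduct, sq])
  · rw [qf, hR.mulVec_eigenvectorBasis, hmax, dotProduct_smul]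
    simp [smul_eq_mul]

lemma lamMax_mono {p : ℕ} [NeZero p] {R S : Matrix (Fin p) (Fin p) ℝ}
    (hR : R.IsHermitian) (hS : S.IsHermitian) (h : ∀ x, qf R x ≤ qf S x) :
    lamMax R ≤ lamMax S := by
  obtain ⟨v, hv, hq⟩ := exists_qf_eq_lamMax hR
  have := (hq ▸ h v).trans (qf_le_lamMax hS v)
  exact le_of_mul_le_mul_right this hv


section Machinery
variable {n m : ℕ} (A : Matrix (Fin n) (Fin n) ℝ) (B : Matrix (Fin n) (Fin m) ℝ)
  (P : Matrix (Fin n) (Fin n) ℝ) (Q : Matrix (Fin m) (Fin m) ℝ)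
  (X0 : Set (Fin n → ℝ)) (U : Set (Fin m → ℝ))

lemma traj_congr (x : Fin n → ℝ) (u u' : ℕ → Fin m → ℝ) (s : ℕ)
    (h : ∀ τ < s, u τ = u' τ) : ∀ τ ≤ s, traj A B x u τ = traj A B x u' τ := by
  intro τ hτ
  induction τ with
  | zero => rfl
  | succ k ih =>
    simp only [traj, ih (Nat.le_of_succ_le hτ), h k (Nat.lt_of_succ_le hτ)]

lemma traj_shift (x : Fin n → ℝ) (u : ℕ → Fin m → ℝ) (s : ℕ) :
    ∀ τ, traj A B (traj A B x u s) (fun σ => u (s + σ)) τ = traj A B x u (s + τ) := by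
  intro τ
  induction τ with
  | zero => rfl
  | succ k ih =>
    show A *ᵥ _ + B *ᵥ u (s + k) = traj A B x u (s + k + 1)
    simp only [traj, ih]

variable {P Q} in
lemma cost_nonneg (hP : P.PosSemidef) (hQ : Q.PosSemidef) (N : ℕ) (x : Fin n → ℝ)
    (u : ℕ → Fin m → ℝ) : 0 ≤ cost A B P Q N x u :=
  add_nonneg (Finset.sum_nonneg fun τ _ => add_nonneg (qf_nonneg hP _) (qf_nonneg hQ _))
    (qf_nonneg hP _)

variable {P Q} in
lemma Vopt_le_cost (hP : P.PosSemidef) (hQ : Q.PosSemidef) (N : ℕ) (x : Fin n → ℝ)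
    {u : ℕ → Fin m → ℝ} (hu : Feasible A B X0 U N x u) :
    Vopt A B P Q X0 U N x ≤ cost A B P Q N x u :=
  csInf_le ⟨0, fun _ ⟨v, _, hv⟩ => hv ▸ cost_nonneg A B hP hQ N x v⟩ ⟨u, hu, rfl⟩

variable {P Q} in
lemma Vopt_nonneg (hP : P.PosSemidef) (hQ : Q.PosSemidef) (N : ℕ) (x : Fin n → ℝ)
    (hne : ∃ u, Feasible A B X0 U N x u) : 0 ≤ Vopt A B P Q X0 U N x := by
  obtain ⟨u, hu⟩ := hne
  exact le_csInf ⟨_, u, hu, rfl⟩ fun _ ⟨v, _, hv⟩ => hv ▸ cost_nonneg A B hP hQ N x v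

variable {P Q} in
lemma le_Vopt (N : ℕ) (x : Fin n → ℝ) {V : ℝ}
    (hne : ∃ u, Feasible A B X0 U N x u)
    (hb : ∀ v, Feasible A B X0 U N x v → V ≤ cost A B P Q N x v) :
    V ≤ Vopt A B P Q X0 U N x :=
  le_csInf (hne.elim fun u hu => ⟨_, u, hu, rfl⟩)
    (fun b hb' => hb'.elim fun v hv => hv.2 ▸ hb v hv.1)

end Machinery

lemma dot_dim0 (x y : Fin 0 → ℝ) : x ⬝ᵥ y = 0 := by simp [dotProduct]

lemma lamMin_dim0 (R : Matrix (Fin 0) (Fin 0) ℝ) : lamMin R = 0 := by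
  rw [lamMin_eq (Subsingleton.elim _ _ : R.IsHermitian)]
  rw [iInf_of_isEmpty]
  exact Real.sInf_empty


section FB
variable {n m : ℕ}
  (A : Matrix (Fin n) (Fin n) ℝ) (B : Matrix (Fin n) (Fin m) ℝ)
  (K : Matrix (Fin m) (Fin n) ℝ) (Qb Pb : Matrix (Fin n) (Fin n) ℝ)
  (hQb : Qb.PosDef) (hPb : Pb.PosDef)
  (hLyap : (A + B * K)ᵀ * Pb * (A + B * K) - Pb = -Qb)
  (c : ℝ) (hc : 0 < c)
  (X0 : Set (Fin n → ℝ)) (hX0 : X0 = {x : Fin n → ℝ | qf Pb x ≤ c})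
  (X : Set (Fin n → ℝ)) (U : Set (Fin m → ℝ))
  (h0U : (0 : Fin m → ℝ) ∈ U)
  (hX0X : X0 ⊆ X) (hKU : ∀ x ∈ X, K *ᵥ x ∈ U)
  (P : Matrix (Fin n) (Fin n) ℝ) (Q : Matrix (Fin m) (Fin m) ℝ)
  (hP : P.PosDef) (hQ : Q.PosDef)

include hQb hPb hLyap hc hX0 h0U hX0X hKU hP hQ in
lemma feedback_bound (M : ℕ) (z : Fin n → ℝ) (hz : z ∈ X0) :
    Vopt A B P Q X0 U M z ≤ phi Qb Pb P Q K M * (z ⬝ᵥ z) := by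
  have hKQK : (Kᵀ * Q * K).PosSemidef := by
    have h := hQ.posSemidef.conjTranspose_mul_mul_same K
    rwa [Matrix.conjTranspose_eq_transpose_of_trivial] at h
  have hS : (P + Kᵀ * Q * K).IsHermitian := hP.isHermitian.add hKQK.isHermitian
  have hPS : ∀ w, qf P w ≤ qf (P + Kᵀ * Q * K) w := fun w => by
    rw [qf_add]; linarith [qf_nonneg hKQK w]
  rcases Nat.eq_zero_or_pos n with hn | hn
  · subst hn
    have hz0 : phi Qb Pb P Q K M * (z ⬝ᵥ z) = 0 := by rw [dot_dim0, mul_zero]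
    rw [hz0]
    have hfeas0 : Feasible A B X0 U M z (fun _ => 0) := by
      constructor
      · intro τ _; exact h0U
      · intro τ _; rw [hX0]; exact le_of_eq_of_le (dot_dim0 _ _) hc.le
    calc Vopt A B P Q X0 U M z ≤ cost A B P Q M z (fun _ => 0) :=
          Vopt_le_cost A B X0 U hP.posSemidef hQ.posSemidef M z hfeas0
      _ = 0 := by
          simp [cost, qf, dot_dim0]
  · haveI : NeZero n := ⟨hn.ne'⟩
    set Abar := A + B * K with hAbar
    set lam := lamParam Qb Pb with hlamdef
    -- basic positivity
    have hminPb : 0 < lamMin Pb := lamMin_pos hPb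
    have hmaxPb : 0 < lamMax Pb := hminPb.trans_le (lamMin_le_lamMax hPb.isHermitian)
    have hminQb : 0 < lamMin Qb := lamMin_pos hQb
    have hminP : 0 < lamMin P := lamMin_pos hP
    have hA2 : Abarᵀ * Pb * Abar = Pb - Qb := by
      have h := hLyap
      rw [sub_eq_iff_eq_add] at h
      rw [h]; abel
    -- one-step decay
    have hstep : ∀ w, qf Pb (Abar *ᵥ w) ≤ lam * qf Pb w := by
      intro w
      have h1 : qf Pb (Abar *ᵥ w) = qf Pb w - qf Qb w := by
        rw [← qf_transform, hA2, qf_sub]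
      have h2 : lamMin Qb / lamMax Pb * qf Pb w ≤ qf Qb w := by
        have h3 : qf Pb w ≤ lamMax Pb * (w ⬝ᵥ w) := qf_le_lamMax hPb.isHermitian w
        have h4 : lamMin Qb * (w ⬝ᵥ w) ≤ qf Qb w := lamMin_le_qf hQb.isHermitian w
        have h5 : lamMin Qb / lamMax Pb * qf Pb w ≤
            lamMin Qb / lamMax Pb * (lamMax Pb * (w ⬝ᵥ w)) :=
          mul_le_mul_of_nonneg_left h3 (by positivity)
        calc lamMin Qb / lamMax Pb * qf Pb w ≤
            lamMin Qb / lamMax Pb * (lamMax Pb * (w ⬝ᵥ w)) := h5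
          _ = lamMin Qb * (w ⬝ᵥ w) := by field_simp
          _ ≤ qf Qb w := h4
      rw [h1, hlamdef, lamParam]
      ring_nf
      ring_nf at h2
      linarith
    -- lam ∈ [0, 1)
    have hlam1 : lam < 1 := by
      rw [hlamdef, lamParam]
      have : 0 < lamMin Qb / lamMax Pb := by positivity
      linarith
    have hlam0 : 0 ≤ lam := by
      set w : Fin n → ℝ := Pi.single 0 1 with hw
      have hwne : w ≠ 0 := by
        intro h
        have := congrFun h 0
        simp [hw] at this
      have h1 : 0 < qf Pb w := by
        have := hPb.dotProduct_mulVec_pos hwne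
        simpa [qf] using this
      have h2 : 0 ≤ qf Pb (Abar *ᵥ w) := qf_nonneg hPb.posSemidef _
      nlinarith [hstep w]
    -- closed-loop trajectory
    set zb : ℕ → Fin n → ℝ := fun τ => Abar ^ τ *ᵥ z with hzb
    have hzb0 : zb 0 = z := by simp [hzb]
    have hzbs : ∀ τ, zb (τ + 1) = Abar *ᵥ zb τ := by
      intro τ
      rw [hzb]
      simp only [pow_succ']
      rw [← Matrix.mulVec_mulVec]
    clear_value zb
    have hW : ∀ τ, qf Pb (zb τ) ≤ lam ^ τ * qf Pb z := by
      intro τ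
      induction τ with
      | zero => simp [hzb0]
      | succ k ih =>
        calc qf Pb (zb (k+1)) = qf Pb (Abar *ᵥ zb k) := by rw [hzbs]
          _ ≤ lam * qf Pb (zb k) := hstep _
          _ ≤ lam * (lam ^ k * qf Pb z) := mul_le_mul_of_nonneg_left ih hlam0
          _ = lam ^ (k+1) * qf Pb z := by ring
    have hzbX0 : ∀ τ, zb τ ∈ X0 := by
      intro τ
      rw [hX0]
      have h1 : lam ^ τ ≤ 1 := pow_le_one₀ hlam0 hlam1.le
      have h2 : 0 ≤ qf Pb z := qf_nonneg hPb.posSemidef z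
      have h3 : qf Pb z ≤ c := by rw [hX0] at hz; exact hz
      calc qf Pb (zb τ) ≤ lam ^ τ * qf Pb z := hW τ
        _ ≤ 1 * qf Pb z := mul_le_mul_of_nonneg_right h1 h2
        _ ≤ c := by linarith
    set v : ℕ → Fin m → ℝ := fun τ => K *ᵥ zb τ with hv
    have hvτ : ∀ τ, v τ = K *ᵥ zb τ := fun τ => rfl
    clear_value v
    have htraj : ∀ τ, traj A B z v τ = zb τ := by
      intro τ
      induction τ with
      | zero => simp [traj, hzb0]
      | succ k ih =>
        show A *ᵥ traj A B z v k + B *ᵥ v k = zb (k + 1)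
        rw [ih, hzbs k, hvτ k, hAbar, Matrix.add_mulVec, Matrix.mulVec_mulVec]
    have hfeasv : Feasible A B X0 U M z v := by
      constructor
      · intro τ _; rw [hvτ]; exact hKU _ (hX0X (hzbX0 τ))
      · intro τ _; rw [htraj]; exact hzbX0 _
    -- the quadratic bound on states
    have hSmax : lamMin P ≤ lamMax (P + Kᵀ * Q * K) :=
      (lamMin_le_lamMax hP.isHermitian).trans (lamMax_mono hP.isHermitian hS hPS)
    have hSmax0 : 0 ≤ lamMax (P + Kᵀ * Q * K) := hminP.le.trans hSmax
    have hterm : ∀ τ, qf (P + Kᵀ * Q * K) (zb τ) ≤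
        (lamMax Pb * lamMax (P + Kᵀ * Q * K) / lamMin Pb) * (z ⬝ᵥ z) * lam ^ τ := by
      intro τ
      have h1 : qf (P + Kᵀ * Q * K) (zb τ) ≤ lamMax (P + Kᵀ * Q * K) * (zb τ ⬝ᵥ zb τ) :=
        qf_le_lamMax hS _
      have h2 : lamMin Pb * (zb τ ⬝ᵥ zb τ) ≤ lam ^ τ * (lamMax Pb * (z ⬝ᵥ z)) :=
        (lamMin_le_qf hPb.isHermitian _).trans ((hW τ).trans
          (mul_le_mul_of_nonneg_left (qf_le_lamMax hPb.isHermitian z)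
            (pow_nonneg hlam0 τ)))
      have h3 : zb τ ⬝ᵥ zb τ ≤ lam ^ τ * (lamMax Pb * (z ⬝ᵥ z)) / lamMin Pb :=
        (le_div_iff₀' hminPb).mpr h2
      calc qf (P + Kᵀ * Q * K) (zb τ)
          ≤ lamMax (P + Kᵀ * Q * K) * (zb τ ⬝ᵥ zb τ) := h1
        _ ≤ lamMax (P + Kᵀ * Q * K) * (lam ^ τ * (lamMax Pb * (z ⬝ᵥ z)) / lamMin Pb) :=
            mul_le_mul_of_nonneg_left h3 hSmax0
        _ = (lamMax Pb * lamMax (P + Kᵀ * Q * K) / lamMin Pb) * (z ⬝ᵥ z) * lam ^ τ := by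
            ring
    -- cost bound
    have hcost : cost A B P Q M z v ≤ phi Qb Pb P Q K M * (z ⬝ᵥ z) := by
      have hc1 : cost A B P Q M z v ≤
          ∑ τ ∈ Finset.range (M + 1), qf (P + Kᵀ * Q * K) (zb τ) := by
        rw [cost, Finset.sum_range_succ]
        have hterms : ∀ τ, qf P (traj A B z v τ) + qf Q (v τ) =
            qf (P + Kᵀ * Q * K) (zb τ) := by
          intro τ
          rw [htraj, qf_add, hvτ, ← qf_transform]
        have hfin : qf P (traj A B z v M) ≤ qf (P + Kᵀ * Q * K) (zb M) := by
          rw [htraj]; exact hPS _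
        rw [Finset.sum_congr rfl fun τ _ => hterms τ]
        linarith
      have hc2 : ∑ τ ∈ Finset.range (M + 1), qf (P + Kᵀ * Q * K) (zb τ) ≤
          ∑ τ ∈ Finset.range (M + 1),
            (lamMax Pb * lamMax (P + Kᵀ * Q * K) / lamMin Pb) * (z ⬝ᵥ z) * lam ^ τ :=
        Finset.sum_le_sum fun τ _ => hterm τ
      have hc3 : ∑ τ ∈ Finset.range (M + 1),
            (lamMax Pb * lamMax (P + Kᵀ * Q * K) / lamMin Pb) * (z ⬝ᵥ z) * lam ^ τ =
          phi Qb Pb P Q K M * (z ⬝ᵥ z) := by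
        rw [← Finset.mul_sum, geom_sum_eq hlam1.ne, phi, ← hlamdef]
        have hne : lam - 1 ≠ 0 := sub_ne_zero.mpr hlam1.ne
        have hne' : (1:ℝ) - lam ≠ 0 := sub_ne_zero.mpr hlam1.ne'
        rw [show (lam ^ (M+1) - 1)/(lam - 1) = (1 - lam ^ (M+1))/(1 - lam) by
          rw [div_eq_div_iff hne hne']; ring]
        ring
      linarith
    exact (Vopt_le_cost A B X0 U hP.posSemidef hQ.posSemidef M z hfeasv).trans hcost


include hQb hPb hLyap hP hQ in
lemma phi_facts [NeZero n] (M : ℕ) :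
    lamMin P ≤ phi Qb Pb P Q K M ∧ 0 < phi Qb Pb P Q K M := by
  set Abar := A + B * K with hAbar
  set lam := lamParam Qb Pb with hlamdef
  have hminPb : 0 < lamMin Pb := lamMin_pos hPb
  have hmaxPb : 0 < lamMax Pb := hminPb.trans_le (lamMin_le_lamMax hPb.isHermitian)
  have hminQb : 0 < lamMin Qb := lamMin_pos hQb
  have hminP : 0 < lamMin P := lamMin_pos hP
  have hKQK : (Kᵀ * Q * K).PosSemidef := by
    have h := hQ.posSemidef.conjTranspose_mul_mul_same K
    rwa [Matrix.conjTranspose_eq_transpose_of_trivial] at h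
  have hS : (P + Kᵀ * Q * K).IsHermitian := hP.isHermitian.add hKQK.isHermitian
  have hPS : ∀ w, qf P w ≤ qf (P + Kᵀ * Q * K) w := fun w => by
    rw [qf_add]; linarith [qf_nonneg hKQK w]
  have hSmax : lamMin P ≤ lamMax (P + Kᵀ * Q * K) :=
    (lamMin_le_lamMax hP.isHermitian).trans (lamMax_mono hP.isHermitian hS hPS)
  have hA2 : Abarᵀ * Pb * Abar = Pb - Qb := by
    have h := hLyap
    rw [sub_eq_iff_eq_add] at h
    rw [h]; abel
  have hstep : ∀ w, qf Pb (Abar *ᵥ w) ≤ lam * qf Pb w := by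
    intro w
    have h1 : qf Pb (Abar *ᵥ w) = qf Pb w - qf Qb w := by
      rw [← qf_transform, hA2, qf_sub]
    have h3 : qf Pb w ≤ lamMax Pb * (w ⬝ᵥ w) := qf_le_lamMax hPb.isHermitian w
    have h4 : lamMin Qb * (w ⬝ᵥ w) ≤ qf Qb w := lamMin_le_qf hQb.isHermitian w
    have h2 : lamMin Qb / lamMax Pb * qf Pb w ≤ qf Qb w := by
      calc lamMin Qb / lamMax Pb * qf Pb w ≤
          lamMin Qb / lamMax Pb * (lamMax Pb * (w ⬝ᵥ w)) :=
            mul_le_mul_of_nonneg_left h3 (by positivity)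
        _ = lamMin Qb * (w ⬝ᵥ w) := by field_simp
        _ ≤ qf Qb w := h4
    rw [h1, hlamdef, lamParam]
    ring_nf
    ring_nf at h2
    linarith
  have hlam1 : lam < 1 := by
    rw [hlamdef, lamParam]
    have : 0 < lamMin Qb / lamMax Pb := by positivity
    linarith
  have hlam0 : 0 ≤ lam := by
    set w : Fin n → ℝ := Pi.single 0 1 with hw
    have hwne : w ≠ 0 := by
      intro h
      have := congrFun h 0
      simp [hw] at this
    have h1 : 0 < qf Pb w := by
      have := hPb.dotProduct_mulVec_pos hwne
      simpa [qf] using this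
    have h2 : 0 ≤ qf Pb (Abar *ᵥ w) := qf_nonneg hPb.posSemidef _
    nlinarith [hstep w]
  have hgeom : 1 ≤ (1 - lam ^ (M + 1)) / (1 - lam) := by
    have hsum : (1 - lam ^ (M + 1)) / (1 - lam) = ∑ τ ∈ Finset.range (M + 1), lam ^ τ := by
      rw [geom_sum_eq hlam1.ne]
      rw [div_eq_div_iff (sub_ne_zero.mpr hlam1.ne') (sub_ne_zero.mpr hlam1.ne)]
      ring
    rw [hsum]
    calc (1:ℝ) = lam ^ 0 := by norm_num
      _ ≤ ∑ τ ∈ Finset.range (M + 1), lam ^ τ :=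
        Finset.single_le_sum (f := fun τ => lam ^ τ)
          (fun τ _ => pow_nonneg hlam0 τ) (Finset.mem_range.mpr (Nat.succ_pos M))
  have hratio : 1 ≤ lamMax Pb / lamMin Pb :=
    (one_le_div hminPb).mpr (lamMin_le_lamMax hPb.isHermitian)
  have hphi : phi Qb Pb P Q K M =
      lamMax (P + Kᵀ * Q * K) * (lamMax Pb / lamMin Pb) * ((1 - lam ^ (M+1)) / (1 - lam)) := by
    rw [phi, ← hlamdef]; ring
  have hr0 : (0:ℝ) ≤ lamMax Pb / lamMin Pb := by linarith
  have hrg : 1 ≤ lamMax Pb / lamMin Pb * ((1 - lam ^ (M+1)) / (1 - lam)) := by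
    nlinarith [mul_le_mul hratio hgeom zero_le_one hr0]
  constructor
  · rw [hphi]
    nlinarith [hminP, hSmax, hrg]
  · rw [hphi]
    nlinarith [hminP, hSmax, hrg]

end FB

section Split
variable {n m : ℕ} (A : Matrix (Fin n) (Fin n) ℝ) (B : Matrix (Fin n) (Fin m) ℝ)
  (P : Matrix (Fin n) (Fin n) ℝ) (Q : Matrix (Fin m) (Fin m) ℝ)

lemma cost_split (x : Fin n → ℝ) (u : ℕ → Fin m → ℝ) {N ℓ : ℕ} (h : ℓ ≤ N) :
    cost A B P Q N x u =
      (∑ τ ∈ Finset.range (N - ℓ), (qf P (traj A B x u τ) + qf Q (u τ))) +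
        cost A B P Q ℓ (traj A B x u (N - ℓ)) (fun σ => u (N - ℓ + σ)) := by
  unfold cost
  have hterm : traj A B (traj A B x u (N - ℓ)) (fun σ => u (N - ℓ + σ)) ℓ =
      traj A B x u N := by
    rw [traj_shift]
    have hNN : N - ℓ + ℓ = N := by omega
    rw [hNN]
  have hmid : ∀ σ, traj A B (traj A B x u (N - ℓ)) (fun σ => u (N - ℓ + σ)) σ =
      traj A B x u (N - ℓ + σ) := traj_shift A B x u (N - ℓ)
  have hsum : ∑ τ ∈ Finset.range N, (qf P (traj A B x u τ) + qf Q (u τ)) =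
      (∑ τ ∈ Finset.range (N - ℓ), (qf P (traj A B x u τ) + qf Q (u τ))) +
        ∑ τ ∈ Finset.Ico (N - ℓ) N, (qf P (traj A B x u τ) + qf Q (u τ)) := by
    rw [Finset.range_eq_Ico, ← Finset.sum_Ico_consecutive _ (Nat.zero_le _) (Nat.sub_le N ℓ), Finset.range_eq_Ico]
  have hre : ∑ τ ∈ Finset.Ico (N - ℓ) N, (qf P (traj A B x u τ) + qf Q (u τ)) =
      ∑ σ ∈ Finset.range ℓ,
        (qf P (traj A B (traj A B x u (N - ℓ)) (fun σ => u (N - ℓ + σ)) σ) +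
          qf Q (u (N - ℓ + σ))) := by
    rw [Finset.sum_Ico_eq_sum_range]
    have hNl : N - (N - ℓ) = ℓ := by omega
    rw [hNl]
    exact Finset.sum_congr rfl fun σ _ => by rw [hmid σ]
  rw [hsum, hre, hterm]
  ring

end Split


/-- Geometric decay along the optimal trajectory: with `(u(0),…,u(N−1))`
an optimal feasible sequence for the `N`-QP at `x ∈ X₀` (`N ≥ 1`), for every `ℓ ≤ N`,
`V_ℓ(x(N−ℓ)) ≤ (∏_{κ=ℓ}^{N−1}(1 − λ_min(P)/φ_{κ+1}))·V_N(x)` (with `V_0(z) = zᵀPz`),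
and in particular `‖x(N)‖² ≤ (1/λ_min(P))·(∏_{κ=0}^{N−1}(1 − λ_min(P)/φ_{κ+1}))·V_N(x)`. -/
theorem stmt8 {n m : ℕ}
    (A : Matrix (Fin n) (Fin n) ℝ) (B : Matrix (Fin n) (Fin m) ℝ)
    (K : Matrix (Fin m) (Fin n) ℝ) (Qb Pb : Matrix (Fin n) (Fin n) ℝ)
    (hQb : Qb.PosDef) (hPb : Pb.PosDef)
    (hLyap : (A + B * K)ᵀ * Pb * (A + B * K) - Pb = -Qb)
    (c : ℝ) (hc : 0 < c)
    (X0 : Set (Fin n → ℝ)) (hX0 : X0 = {x : Fin n → ℝ | qf Pb x ≤ c})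
    (X : Set (Fin n → ℝ)) (U : Set (Fin m → ℝ))
    (hX : Convex ℝ X) (hU : Convex ℝ U)
    (h0X : (0 : Fin n → ℝ) ∈ X) (h0U : (0 : Fin m → ℝ) ∈ U)
    (hX0X : X0 ⊆ X) (hKU : ∀ x ∈ X, K *ᵥ x ∈ U)
    (P : Matrix (Fin n) (Fin n) ℝ) (Q : Matrix (Fin m) (Fin m) ℝ)
    (hP : P.PosDef) (hQ : Q.PosDef)
    (N : ℕ) (hN : 1 ≤ N) (x : Fin n → ℝ) (hx : x ∈ X0)
    (u : ℕ → Fin m → ℝ) (hfeas : Feasible A B X0 U N x u)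
    (hopt : cost A B P Q N x u = Vopt A B P Q X0 U N x) :
    (∀ ℓ ≤ N,
      Vopt A B P Q X0 U ℓ (traj A B x u (N - ℓ))
        ≤ (∏ κ ∈ Finset.Ico ℓ N, (1 - lamMin P / phi Qb Pb P Q K (κ + 1))) *
            Vopt A B P Q X0 U N x) ∧
    traj A B x u N ⬝ᵥ traj A B x u N
        ≤ (1 / lamMin P) *
            ((∏ κ ∈ Finset.range N, (1 - lamMin P / phi Qb Pb P Q K (κ + 1))) *
              Vopt A B P Q X0 U N x) := by
  have hPsd := hP.posSemidef
  have hQsd := hQ.posSemidef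
  have hfeas_tail : ∀ ℓ, ℓ ≤ N →
      Feasible A B X0 U ℓ (traj A B x u (N - ℓ)) (fun σ => u (N - ℓ + σ)) := by
    intro ℓ hℓ
    constructor
    · intro τ hτ
      show u (N - ℓ + τ) ∈ U
      exact hfeas.1 (N - ℓ + τ) (by omega)
    · intro τ hτ
      rw [traj_shift]
      have he : N - ℓ + (τ + 1) = (N - ℓ + τ) + 1 := by omega
      rw [he]
      exact hfeas.2 (N - ℓ + τ) (by omega)
  set T : ℕ → ℝ :=
    fun ℓ => cost A B P Q ℓ (traj A B x u (N - ℓ)) (fun σ => u (N - ℓ + σ)) with hT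
  have hVleT : ∀ ℓ, ℓ ≤ N → Vopt A B P Q X0 U ℓ (traj A B x u (N - ℓ)) ≤ T ℓ :=
    fun ℓ hℓ => Vopt_le_cost A B X0 U hPsd hQsd ℓ _ (hfeas_tail ℓ hℓ)
  have hcsp : ∀ ℓ, ℓ ≤ N → cost A B P Q N x u =
      (∑ τ ∈ Finset.range (N - ℓ), (qf P (traj A B x u τ) + qf Q (u τ))) + T ℓ :=
    fun ℓ hℓ => cost_split A B P Q x u hℓ
  have hTleV : ∀ ℓ, ℓ ≤ N → T ℓ ≤ Vopt A B P Q X0 U ℓ (traj A B x u (N - ℓ)) := by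
    intro ℓ hℓ
    apply le_Vopt A B X0 U ℓ _ ⟨_, hfeas_tail ℓ hℓ⟩
    intro v hvfeas
    set w : ℕ → Fin m → ℝ := fun τ => if τ < N - ℓ then u τ else v (τ - (N - ℓ)) with hw
    have hwval_lo : ∀ τ, τ < N - ℓ → w τ = u τ := fun τ hτ => by simp [hw, if_pos hτ]
    have hwval_hi : ∀ σ, w (N - ℓ + σ) = v σ := fun σ => by
      have e : N - ℓ + σ - (N - ℓ) = σ := by omega
      simp only [hw]
      rw [if_neg (by omega), e]
    clear_value w
    have h_low : ∀ τ, τ ≤ N - ℓ → traj A B x w τ = traj A B x u τ :=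
      traj_congr A B x w u (N - ℓ) (fun σ hσ => hwval_lo σ hσ)
    have h_shift_w : (fun σ => w (N - ℓ + σ)) = v := funext hwval_hi
    have hsplitw := cost_split A B P Q x w (show ℓ ≤ N from hℓ)
    rw [h_low (N - ℓ) le_rfl, h_shift_w] at hsplitw
    have hheads : ∑ τ ∈ Finset.range (N - ℓ), (qf P (traj A B x w τ) + qf Q (w τ)) =
        ∑ τ ∈ Finset.range (N - ℓ), (qf P (traj A B x u τ) + qf Q (u τ)) :=
      Finset.sum_congr rfl fun τ hτ => by
        rw [h_low τ (le_of_lt (Finset.mem_range.mp hτ)),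
          hwval_lo τ (Finset.mem_range.mp hτ)]
    have hwfeas : Feasible A B X0 U N x w := by
      constructor
      · intro τ hτ
        by_cases hcase : τ < N - ℓ
        · rw [hwval_lo τ hcase]; exact hfeas.1 τ hτ
        · have hσ : τ = N - ℓ + (τ - (N - ℓ)) := by omega
          rw [hσ, hwval_hi]
          exact hvfeas.1 (τ - (N - ℓ)) (by omega)
      · intro τ hτ
        by_cases hcase : τ + 1 ≤ N - ℓ
        · rw [h_low (τ + 1) hcase]; exact hfeas.2 τ (by omega)
        · have hσ : τ + 1 = N - ℓ + ((τ - (N - ℓ)) + 1) := by omega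
          rw [hσ, ← traj_shift A B x w (N - ℓ), h_low (N - ℓ) le_rfl, h_shift_w]
          exact hvfeas.2 (τ - (N - ℓ)) (by omega)
    have h1 : Vopt A B P Q X0 U N x ≤ cost A B P Q N x w :=
      Vopt_le_cost A B X0 U hPsd hQsd N x hwfeas
    have h2 := hcsp ℓ hℓ
    rw [hopt] at h2
    linarith [hsplitw, hheads]
  have hfactor : ∀ κ : ℕ, 0 ≤ 1 - lamMin P / phi Qb Pb P Q K (κ + 1) := by
    intro κ
    rcases Nat.eq_zero_or_pos n with hn | hn
    · subst hn
      rw [lamMin_dim0, zero_div]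
      norm_num
    · haveI : NeZero n := ⟨hn.ne'⟩
      obtain ⟨h1, h2⟩ := phi_facts A B K Qb Pb hQb hPb hLyap P Q hP hQ (κ + 1)
      have := (div_le_one h2).mpr h1
      linarith
  have hdescent : ∀ ℓ, ℓ < N →
      T ℓ ≤ (1 - lamMin P / phi Qb Pb P Q K (ℓ + 1)) * T (ℓ + 1) := by
    intro ℓ hℓN
    set z := traj A B x u (N - (ℓ + 1)) with hz
    have hzX0 : z ∈ X0 := by
      rcases Nat.eq_zero_or_pos (N - (ℓ + 1)) with h0 | h0
      · rw [hz, h0]; exact hx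
      · obtain ⟨σ, hσ⟩ : ∃ σ, N - (ℓ + 1) = σ + 1 := ⟨N - (ℓ + 1) - 1, by omega⟩
        rw [hz, hσ]
        exact hfeas.2 σ (by omega)
    have hone : T (ℓ + 1) = (qf P z + qf Q (u (N - (ℓ + 1)))) + T ℓ := by
      have h := cost_split A B P Q z (fun σ => u (N - (ℓ + 1) + σ))
        (show ℓ ≤ ℓ + 1 by omega)
      have hsub1 : ℓ + 1 - ℓ = 1 := by omega
      rw [hsub1] at h
      have htr1 : traj A B z (fun σ => u (N - (ℓ + 1) + σ)) 1 = traj A B x u (N - ℓ) := by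
        rw [hz, traj_shift]
        have e : N - (ℓ + 1) + 1 = N - ℓ := by omega
        rw [e]
      have hfun : (fun σ => (fun σ' => u (N - (ℓ + 1) + σ')) (1 + σ)) =
          (fun σ => u (N - ℓ + σ)) := by
        funext σ
        show u (N - (ℓ + 1) + (1 + σ)) = u (N - ℓ + σ)
        have e : N - (ℓ + 1) + (1 + σ) = N - ℓ + σ := by omega
        rw [e]
      rw [htr1, hfun] at h
      have hTl1 : T (ℓ + 1) = cost A B P Q (ℓ + 1) z (fun σ => u (N - (ℓ + 1) + σ)) := by
        simp only [hT, hz]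
      rw [hTl1, h, Finset.sum_range_one]
      simp only [hT]
      norm_num
      rfl
    have hstage : 0 ≤ qf Q (u (N - (ℓ + 1))) := qf_nonneg hQsd _
    have hqfz : lamMin P / phi Qb Pb P Q K (ℓ + 1) * T (ℓ + 1) ≤ qf P z := by
      have hTub : T (ℓ + 1) ≤ phi Qb Pb P Q K (ℓ + 1) * (z ⬝ᵥ z) :=
        le_trans (hTleV (ℓ + 1) (by omega))
          (feedback_bound A B K Qb Pb hQb hPb hLyap c hc X0 hX0 X U h0U hX0X hKU
            P Q hP hQ (ℓ + 1) z hzX0)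
      rcases Nat.eq_zero_or_pos n with hn | hn
      · subst hn
        rw [lamMin_dim0, zero_div, zero_mul]
        exact qf_nonneg hPsd z
      · haveI : NeZero n := ⟨hn.ne'⟩
        obtain ⟨h1, h2⟩ := phi_facts A B K Qb Pb hQb hPb hLyap P Q hP hQ (ℓ + 1)
        have hθ0 : 0 ≤ lamMin P / phi Qb Pb P Q K (ℓ + 1) :=
          div_nonneg (lamMin_pos hP).le h2.le
        calc lamMin P / phi Qb Pb P Q K (ℓ + 1) * T (ℓ + 1)
            ≤ lamMin P / phi Qb Pb P Q K (ℓ + 1) * (phi Qb Pb P Q K (ℓ + 1) * (z ⬝ᵥ z)) :=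
              mul_le_mul_of_nonneg_left hTub hθ0
          _ = lamMin P * (z ⬝ᵥ z) := by
              field_simp
          _ ≤ qf P z := lamMin_le_qf hP.isHermitian z
    have hexp : (1 - lamMin P / phi Qb Pb P Q K (ℓ + 1)) * T (ℓ + 1) =
        T (ℓ + 1) - lamMin P / phi Qb Pb P Q K (ℓ + 1) * T (ℓ + 1) := by ring
    rw [hexp]
    linarith
  have hmain : ∀ d, d ≤ N → T (N - d) ≤
      (∏ κ ∈ Finset.Ico (N - d) N, (1 - lamMin P / phi Qb Pb P Q K (κ + 1))) * T N := by
    intro d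
    induction d with
    | zero => intro _; simp
    | succ k ih =>
      intro hk
      have ihk := ih (by omega)
      have hlt : N - (k + 1) < N := by omega
      have hstep := hdescent (N - (k + 1)) hlt
      have hsucc : N - (k + 1) + 1 = N - k := by omega
      have hTeq : T (N - (k + 1) + 1) = T (N - k) := by rw [hsucc]
      rw [hTeq] at hstep
      have hprod : ∏ κ ∈ Finset.Ico (N - (k + 1)) N,
            (1 - lamMin P / phi Qb Pb P Q K (κ + 1)) =
          (1 - lamMin P / phi Qb Pb P Q K (N - (k + 1) + 1)) *
            ∏ κ ∈ Finset.Ico (N - (k + 1) + 1) N,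
              (1 - lamMin P / phi Qb Pb P Q K (κ + 1)) :=
        Finset.prod_eq_prod_Ico_succ_bot hlt _
      calc T (N - (k + 1))
          ≤ (1 - lamMin P / phi Qb Pb P Q K (N - (k + 1) + 1)) * T (N - k) := hstep
        _ ≤ (1 - lamMin P / phi Qb Pb P Q K (N - (k + 1) + 1)) *
              ((∏ κ ∈ Finset.Ico (N - k) N,
                (1 - lamMin P / phi Qb Pb P Q K (κ + 1))) * T N) :=
            mul_le_mul_of_nonneg_left ihk (hfactor _)
        _ = (∏ κ ∈ Finset.Ico (N - (k + 1)) N,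
              (1 - lamMin P / phi Qb Pb P Q K (κ + 1))) * T N := by
            rw [hprod, hsucc]
            ring
  have hTN : T N = Vopt A B P Q X0 U N x := by
    have hNN : N - N = 0 := Nat.sub_self N
    have hfun : (fun σ => u (0 + σ)) = u := by
      funext σ
      have e : 0 + σ = σ := by omega
      rw [e]
    simp only [hT, hNN, hfun]
    exact hopt
  constructor
  · intro ℓ hℓ
    have hNNl : N - (N - ℓ) = ℓ := by omega
    have h := hmain (N - ℓ) (by omega)
    rw [hNNl, hTN] at h
    exact (hVleT ℓ hℓ).trans h
  · have hT0 : T 0 = qf P (traj A B x u N) := by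
      simp only [hT, Nat.sub_zero, cost, Finset.range_zero, Finset.sum_empty, zero_add]
      rfl
    have h := hmain N le_rfl
    rw [Nat.sub_self, hTN, hT0] at h
    rw [Finset.range_eq_Ico]
    rcases Nat.eq_zero_or_pos n with hn | hn
    · subst hn
      rw [lamMin_dim0, dot_dim0]
      simp
    · haveI : NeZero n := ⟨hn.ne'⟩
      have hminP : 0 < lamMin P := lamMin_pos hP
      have hlow : lamMin P * (traj A B x u N ⬝ᵥ traj A B x u N) ≤ qf P (traj A B x u N) :=
        lamMin_le_qf hP.isHermitian _
      have : traj A B x u N ⬝ᵥ traj A B x u N ≤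
          ((∏ κ ∈ Finset.Ico 0 N, (1 - lamMin P / phi Qb Pb P Q K (κ + 1))) *
            Vopt A B P Q X0 U N x) / lamMin P :=
        (le_div_iff₀' hminP).mpr (hlow.trans h)
      calc traj A B x u N ⬝ᵥ traj A B x u N
          ≤ ((∏ κ ∈ Finset.Ico 0 N, (1 - lamMin P / phi Qb Pb P Q K (κ + 1))) *
              Vopt A B P Q X0 U N x) / lamMin P := this
        _ = (1 / lamMin P) *
              ((∏ κ ∈ Finset.Ico 0 N, (1 - lamMin P / phi Qb Pb P Q K (κ + 1))) *
                Vopt A B P Q X0 U N x) := by ring
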